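/- Addition of conjugate roofs, defined by Roof* A + Roof* B := Roof*(A ∪ B), is well-defined (depends only on the roofs, not on the generating sets), commutative, and associative on the set of conjugate roofs of finite subsets of ℤ³. -/
import Mathlib


/-- `Cone* A`: the upward closure of `A ⊆ ℝ³` in the componentwise order. -/
def ConeC (A : Set (Fin 3 → ℝ)) : Set (Fin 3 → ℝ) :=
  {l | ∃ a ∈ A, ∀ i, a i ≤ l i}

/-- `Roof* A`: points `l` such that for some `m ∈ ℕ`, `l + m·eᵢ ∈ Cone* A` for all `i`. -/
def RoofC (A : Set (Fin 3 → ℝ)) : Set (Fin 3 → ℝ) :=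
  {l | ∃ m : ℕ, ∀ i : Fin 3, l + (m : ℝ) • (Pi.single i 1 : Fin 3 → ℝ) ∈ ConeC A}

/-- Embed a subset of the lattice `ℤ³` into `ℝ³`. -/
def latt (A : Set (Fin 3 → ℤ)) : Set (Fin 3 → ℝ) :=
  (fun l i => (l i : ℝ)) '' A

lemma coneC_mono {S T : Set (Fin 3 → ℝ)} (h : S ⊆ T) : ConeC S ⊆ ConeC T := by
  rintro l ⟨a, ha, hal⟩; exact ⟨a, h ha, hal⟩

lemma roofC_mono {S T : Set (Fin 3 → ℝ)} (h : S ⊆ T) : RoofC S ⊆ RoofC T := by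
  rintro l ⟨m, hm⟩; exact ⟨m, fun i => coneC_mono h (hm i)⟩

lemma subset_roofC (S : Set (Fin 3 → ℝ)) : S ⊆ RoofC S := by
  intro l hl
  refine ⟨0, fun i => ⟨l, hl, fun j => ?_⟩⟩
  simp

lemma roofC_idem (S : Set (Fin 3 → ℝ)) : RoofC (RoofC S) ⊆ RoofC S := by
  rintro l ⟨m, hm⟩
  simp only [ConeC, RoofC, Set.mem_setOf_eq] at hm
  choose a haR hle using hm
  choose f hf using haR
  refine ⟨m + Finset.univ.sup f, fun i => ?_⟩
  obtain ⟨b, hbS, hb⟩ := hf i i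
  refine ⟨b, hbS, fun j => ?_⟩
  have h1 := hb j
  have h2 := hle i j
  have hfi : (f i : ℝ) ≤ ((Finset.univ.sup f : ℕ) : ℝ) := by
    exact_mod_cast Finset.le_sup (Finset.mem_univ i)
  simp only [Pi.add_apply, Pi.smul_apply, smul_eq_mul, Pi.single_apply] at h1 h2 ⊢
  push_cast at *
  by_cases hji : j = i <;> simp [hji] at h1 h2 ⊢ <;> linarith

lemma roof_union_roof (S T : Set (Fin 3 → ℝ)) :
    RoofC (S ∪ T) = RoofC (RoofC S ∪ RoofC T) := by
  apply Set.Subset.antisymm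
  · exact roofC_mono (Set.union_subset_union (subset_roofC S) (subset_roofC T))
  · exact (roofC_mono (Set.union_subset
      (roofC_mono Set.subset_union_left) (roofC_mono Set.subset_union_right))).trans
      (roofC_idem _)

lemma latt_union (A B : Set (Fin 3 → ℤ)) : latt (A ∪ B) = latt A ∪ latt B :=
  Set.image_union _ _ _

/-- Addition of conjugate roofs `Roof* A + Roof* B := Roof* (A ∪ B)` (for finite
`A, B ⊆ ℤ³`) is well defined (depends only on the roofs, not on the generating sets),
commutative, and associative. -/
theorem stmt_17 :
    (∀ A A' B B' : Set (Fin 3 → ℤ), A.Finite → A'.Finite → B.Finite → B'.Finite →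
      RoofC (latt A) = RoofC (latt A') → RoofC (latt B) = RoofC (latt B') →
      RoofC (latt (A ∪ B)) = RoofC (latt (A' ∪ B'))) ∧
    (∀ A B : Set (Fin 3 → ℤ), A.Finite → B.Finite →
      RoofC (latt (A ∪ B)) = RoofC (latt (B ∪ A))) ∧
    (∀ A B C : Set (Fin 3 → ℤ), A.Finite → B.Finite → C.Finite →
      RoofC (latt ((A ∪ B) ∪ C)) = RoofC (latt (A ∪ (B ∪ C)))) := by
  refine ⟨fun A A' B B' _ _ _ _ hA hB => ?_,
    fun A B _ _ => by rw [Set.union_comm],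
    fun A B C _ _ _ => by rw [Set.union_assoc]⟩
  rw [latt_union, latt_union, roof_union_roof, roof_union_roof (latt A') (latt B'), hA, hB]
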